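/- Let u₁, …, u_m be nonzero vectors in ℝⁿ and let f : ℝⁿ → ℝ be smooth and compactly supported. Define S f = Σ_{i=1}^m 𝒳_{u_i} f. Then applying the composition of directional derivative operators 𝒟_{u_1} ∘ 𝒟_{u_2} ∘ ⋯ ∘ 𝒟_{u_m} to S f yields, at every point x ∈ ℝⁿ, the value (Σ_{j=1}^m (Π_{i ≠ j} 𝒟_{u_i}) f)(x), where Π_{i ≠ j} 𝒟_{u_i} denotes the composition of the operators 𝒟_{u_i} over all indices i ≠ j (in increasing order of i). -/

import Mathlib

open MeasureTheory

/-- The divergent beam transform `𝒳_u f` on `ℝⁿ`: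
`(𝒳_u f)(x) = ∫_{-∞}^0 f(x + t • u) dt`. -/
noncomputable def beam {n : ℕ} (u : EuclideanSpace ℝ (Fin n))
    (f : EuclideanSpace ℝ (Fin n) → ℝ) (x : EuclideanSpace ℝ (Fin n)) : ℝ :=
  ∫ t in Set.Iio (0 : ℝ), f (x + t • u)

/-- The directional derivative operator `𝒟_u`. -/
noncomputable def dirD {n : ℕ} (u : EuclideanSpace ℝ (Fin n))
    (f : EuclideanSpace ℝ (Fin n) → ℝ) : EuclideanSpace ℝ (Fin n) → ℝ :=
  fun x => fderiv ℝ f x u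

variable {n : ℕ}

lemma lineCS {E : Type*} [NormedAddCommGroup E] {v : EuclideanSpace ℝ (Fin n)} (hv : v ≠ 0)
    {g : EuclideanSpace ℝ (Fin n) → E} (hg : HasCompactSupport g) (x : EuclideanSpace ℝ (Fin n)) :
    HasCompactSupport (fun t : ℝ => g (x + t • v)) := by
  have hv' : 0 < ‖v‖ := norm_pos_iff.2 hv
  obtain ⟨R, hR⟩ : ∃ R, tsupport g ⊆ Metric.closedBall 0 R :=
    hg.isBounded.subset_closedBall 0
  apply HasCompactSupport.intro (isCompact_Icc (a := -((R + ‖x‖)/‖v‖)) (b := (R + ‖x‖)/‖v‖))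
  intro t ht
  apply image_eq_zero_of_notMem_tsupport
  intro hmem
  have h1 : ‖x + t • v‖ ≤ R := by simpa using hR hmem
  have h2 : ‖t • v‖ ≤ ‖x + t • v‖ + ‖x‖ := by
    have := norm_sub_le (x + t • v) x
    simpa using this
  rw [norm_smul, Real.norm_eq_abs] at h2
  have : |t| ≤ (R + ‖x‖)/‖v‖ := by
    rw [le_div_iff₀ hv']
    nlinarith
  rw [abs_le] at this
  exact ht ⟨this.1, this.2⟩

lemma line_integrable {E : Type*} [NormedAddCommGroup E] [NormedSpace ℝ E]
    {v : EuclideanSpace ℝ (Fin n)} (hv : v ≠ 0)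
    {g : EuclideanSpace ℝ (Fin n) → E} (hgc : Continuous g) (hg : HasCompactSupport g)
    (x : EuclideanSpace ℝ (Fin n)) (s : Set ℝ) :
    Integrable (fun t : ℝ => g (x + t • v)) (volume.restrict s) :=
  ((hgc.comp (continuous_const.add (continuous_id.smul continuous_const))).integrable_of_hasCompactSupport
    (lineCS hv hg x)).restrict


lemma hasFDerivAt_beam {v : EuclideanSpace ℝ (Fin n)} (hv : v ≠ 0)
    {g : EuclideanSpace ℝ (Fin n) → ℝ} (hg : ContDiff ℝ (⊤ : ℕ∞) g)
    (hcs : HasCompactSupport g) (x : EuclideanSpace ℝ (Fin n)) :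
    HasFDerivAt (beam v g) (∫ t in Set.Iio (0:ℝ), fderiv ℝ g (x + t • v)) x := by
  have hv' : 0 < ‖v‖ := norm_pos_iff.2 hv
  have hgd : Differentiable ℝ g := hg.differentiable (by simp)
  have hfc : Continuous (fderiv ℝ g) := (hg.fderiv_right (m := (⊤:ℕ∞)) (by simp)).continuous
  have hfcs : HasCompactSupport (fderiv ℝ g) := hcs.fderiv ℝ
  obtain ⟨R, hR⟩ : ∃ R, tsupport (fderiv ℝ g) ⊆ Metric.closedBall 0 R :=
    hfcs.isBounded.subset_closedBall 0
  obtain ⟨C, hC'⟩ := hfc.norm.bounded_above_of_compact_support hfcs.norm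
  have hC : ∀ y, ‖fderiv ℝ g y‖ ≤ C := fun y => by simpa using hC' y
  set M : ℝ := (R + (‖x‖ + 1)) / ‖v‖ with hM
  have key : HasFDerivAt (fun x' => ∫ t in Set.Iio (0:ℝ), g (x' + t • v))
      (∫ t in Set.Iio (0:ℝ), fderiv ℝ g (x + t • v)) x := by
    apply hasFDerivAt_integral_of_dominated_of_fderiv_le
      (F' := fun x' (t : ℝ) => fderiv ℝ g (x' + t • v))
      (bound := Set.indicator (Set.Icc (-M) M) (fun _ => C)) (s := Metric.ball x 1) (Metric.ball_mem_nhds x one_pos)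
    · exact Filter.Eventually.of_forall fun x' =>
        ((hg.continuous.comp (continuous_const.add (continuous_id.smul
          continuous_const)))).aestronglyMeasurable
    · exact line_integrable hv hg.continuous hcs x _
    · exact ((hfc.comp (continuous_const.add (continuous_id.smul
        continuous_const)))).aestronglyMeasurable
    · apply Filter.Eventually.of_forall
      intro t x' hx'
      have hx'n : ‖x'‖ ≤ ‖x‖ + 1 := by
        have := mem_ball_iff_norm.1 hx'
        have h2 := norm_sub_le x' x  -- not directly; use triangle
        calc ‖x'‖ = ‖(x' - x) + x‖ := by rw [sub_add_cancel]
          _ ≤ ‖x' - x‖ + ‖x‖ := norm_add_le _ _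
          _ ≤ ‖x‖ + 1 := by linarith [le_of_lt this]
      by_cases ht : t ∈ Set.Icc (-M) M
      · rw [Set.indicator_of_mem ht]
        exact hC _
      · rw [Set.indicator_of_notMem ht]
        have htM : M < |t| := by
          by_contra h
          push_neg at h
          exact ht (abs_le.1 h)
        have : fderiv ℝ g (x' + t • v) = 0 := by
          apply image_eq_zero_of_notMem_tsupport
          intro hmem
          have h1 : ‖x' + t • v‖ ≤ R := by simpa using hR hmem
          have h2 : ‖t • v‖ ≤ ‖x' + t • v‖ + ‖x'‖ := by
            have := norm_sub_le (x' + t • v) x'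
            simpa using this
          rw [norm_smul, Real.norm_eq_abs] at h2
          have hMt : |t| ≤ M := by
            rw [hM, le_div_iff₀ hv']
            nlinarith
          exact absurd hMt (not_le.2 htM)
        simp [this]
    · rw [integrable_indicator_iff measurableSet_Icc]
      exact integrableOn_const (lt_of_le_of_lt (Measure.restrict_apply_le _ _)
        measure_Icc_lt_top).ne
    · apply Filter.Eventually.of_forall
      intro t x' hx'
      have h1 : HasFDerivAt (fun y : EuclideanSpace ℝ (Fin n) => y + t • v)
          (ContinuousLinearMap.id ℝ _) x' := (hasFDerivAt_id x').add_const (t • v)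
      have h2 := (hgd (x' + t • v)).hasFDerivAt
      exact (h2.comp x' h1).congr_fderiv (by simp)
  exact key


lemma dirD_contDiff {w : EuclideanSpace ℝ (Fin n)} {g : EuclideanSpace ℝ (Fin n) → ℝ}
    (hg : ContDiff ℝ (⊤ : ℕ∞) g) : ContDiff ℝ (⊤ : ℕ∞) (dirD w g) :=
  (hg.fderiv_right (m := (⊤:ℕ∞)) (by simp)).clm_apply contDiff_const

lemma dirD_hcs {w : EuclideanSpace ℝ (Fin n)} {g : EuclideanSpace ℝ (Fin n) → ℝ}
    (hcs : HasCompactSupport g) : HasCompactSupport (dirD w g) :=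
  hcs.fderiv_apply ℝ w

lemma fderiv_beam_apply {v : EuclideanSpace ℝ (Fin n)} (hv : v ≠ 0)
    {g : EuclideanSpace ℝ (Fin n) → ℝ} (hg : ContDiff ℝ (⊤ : ℕ∞) g)
    (hcs : HasCompactSupport g) (x w : EuclideanSpace ℝ (Fin n)) :
    fderiv ℝ (beam v g) x w = beam v (dirD w g) x := by
  rw [(hasFDerivAt_beam hv hg hcs x).fderiv]
  rw [ContinuousLinearMap.integral_apply (line_integrable hv
    ((hg.fderiv_right (m := (⊤:ℕ∞)) (by simp)).continuous) (hcs.fderiv ℝ) x _) w]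
  rfl

lemma dirD_beam_self {v : EuclideanSpace ℝ (Fin n)} (hv : v ≠ 0)
    {g : EuclideanSpace ℝ (Fin n) → ℝ} (hg : ContDiff ℝ (⊤ : ℕ∞) g)
    (hcs : HasCompactSupport g) (x : EuclideanSpace ℝ (Fin n)) :
    dirD v (beam v g) x = g x := by
  have h := fderiv_beam_apply hv hg hcs x v
  rw [dirD, h]
  -- beam v (dirD v g) x = ∫ t in Iio 0, fderiv g (x + t • v) v = g x by FTC
  have hline : ∀ t : ℝ, HasDerivAt (fun s : ℝ => x + s • v) v t := by
    intro t
    simpa using ((hasDerivAt_id t).smul_const v).const_add x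
  have hphi : ∀ t : ℝ, HasDerivAt (fun s : ℝ => g (x + s • v)) (fderiv ℝ g (x + t • v) v) t := by
    intro t
    exact ((hg.differentiable (by simp)) _).hasFDerivAt.comp_hasDerivAt t (hline t)
  have hCS : HasCompactSupport (fun t : ℝ => g (x + t • v)) := lineCS hv hcs x
  obtain ⟨M, hM⟩ : ∃ M, tsupport (fun t : ℝ => g (x + t • v)) ⊆ Metric.closedBall 0 M :=
    hCS.isBounded.subset_closedBall 0
  have htend : Filter.Tendsto (fun t : ℝ => g (x + t • v)) Filter.atBot (nhds 0) := by
    apply Filter.Tendsto.congr' _ tendsto_const_nhds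
    filter_upwards [Filter.eventually_lt_atBot (-(M + 1))] with t ht
    symm
    apply image_eq_zero_of_notMem_tsupport (f := fun t : ℝ => g (x + t • v))
    intro hmem
    have := hM hmem
    simp only [Metric.mem_closedBall, Real.dist_eq, sub_zero] at this
    have : |t| ≤ M := this
    rw [abs_le] at this
    linarith [this.1]
  have hint : IntegrableOn (fun t : ℝ => fderiv ℝ g (x + t • v) v) (Set.Iic (0:ℝ)) volume := by
    have := line_integrable hv (g := fun y => fderiv ℝ g y v)
      (((hg.fderiv_right (m := (⊤:ℕ∞)) (by simp)).clm_apply contDiff_const).continuous)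
      (hcs.fderiv_apply ℝ v) x (Set.Iic 0)
    exact this
  have key := integral_Iic_of_hasDerivAt_of_tendsto (a := (0:ℝ))
    (f := fun t : ℝ => g (x + t • v)) (f' := fun t : ℝ => fderiv ℝ g (x + t • v) v)
    (hphi 0).continuousAt.continuousWithinAt (fun t _ => hphi t) hint htend
  have hIioIic : (∫ t in Set.Iio (0:ℝ), fderiv ℝ g (x + t • v) v)
      = ∫ t in Set.Iic (0:ℝ), fderiv ℝ g (x + t • v) v := by
    apply setIntegral_congr_set
    exact Iio_ae_eq_Iic
  show (∫ t in Set.Iio (0:ℝ), fderiv ℝ g (x + t • v) v) = g x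
  rw [hIioIic, key]
  simp


section Foldr
variable {m : ℕ} (u : Fin m → EuclideanSpace ℝ (Fin n))

lemma foldr_nice {f : EuclideanSpace ℝ (Fin n) → ℝ}
    (hf : ContDiff ℝ (⊤ : ℕ∞) f) (hsupp : HasCompactSupport f) (l : List (Fin m)) :
    ContDiff ℝ (⊤ : ℕ∞) (l.foldr (fun i g => dirD (u i) g) f) ∧
      HasCompactSupport (l.foldr (fun i g => dirD (u i) g) f) := by
  induction l with
  | nil => exact ⟨hf, hsupp⟩
  | cons a l ih => exact ⟨dirD_contDiff ih.1, dirD_hcs ih.2⟩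

lemma foldr_beam (hu : ∀ i, u i ≠ 0) {v : EuclideanSpace ℝ (Fin n)} (hv : v ≠ 0)
    {f : EuclideanSpace ℝ (Fin n) → ℝ}
    (hf : ContDiff ℝ (⊤ : ℕ∞) f) (hsupp : HasCompactSupport f) (l : List (Fin m)) :
    l.foldr (fun i g => dirD (u i) g) (beam v f)
      = beam v (l.foldr (fun i g => dirD (u i) g) f) := by
  induction l with
  | nil => rfl
  | cons a l ih =>
    funext x
    show dirD (u a) (l.foldr (fun i g => dirD (u i) g) (beam v f)) x = _
    rw [ih]
    show fderiv ℝ (beam v (l.foldr (fun i g => dirD (u i) g) f)) x (u a) = _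
    rw [fderiv_beam_apply hv (foldr_nice u hf hsupp l).1 (foldr_nice u hf hsupp l).2 x (u a)]
    rfl

lemma foldr_cancel (hu : ∀ i, u i ≠ 0) {f : EuclideanSpace ℝ (Fin n) → ℝ}
    (hf : ContDiff ℝ (⊤ : ℕ∞) f) (hsupp : HasCompactSupport f) (l : List (Fin m))
    (hnd : l.Nodup) (j : Fin m) (hj : j ∈ l) :
    l.foldr (fun i g => dirD (u i) g) (beam (u j) f)
      = (l.filter (fun i => i ≠ j)).foldr (fun i g => dirD (u i) g) f := by
  induction l with
  | nil => simp at hj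
  | cons a l ih =>
    rcases List.nodup_cons.1 hnd with ⟨ha, hnd'⟩
    by_cases haj : a = j
    · subst haj
      have hjl : a ∉ l := ha
      have hfil : l.filter (fun i => i ≠ a) = l :=
        List.filter_eq_self.2 (fun b hb => by
          simp only [decide_eq_true_eq]
          exact fun h => hjl (h ▸ hb))
      have : (a :: l).filter (fun i => i ≠ a) = l.filter (fun i => i ≠ a) := by
        rw [List.filter_cons_of_neg (by simp)]
      rw [this, hfil]
      show dirD (u a) (l.foldr (fun i g => dirD (u i) g) (beam (u a) f)) = _
      rw [foldr_beam u hu (hu a) hf hsupp l]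
      funext x
      exact dirD_beam_self (hu a) (foldr_nice u hf hsupp l).1 (foldr_nice u hf hsupp l).2 x
    · have hjl : j ∈ l := by
        rcases List.mem_cons.1 hj with h | h
        · exact absurd h.symm haj
        · exact h
      have : (a :: l).filter (fun i => i ≠ j) = a :: l.filter (fun i => i ≠ j) := by
        rw [List.filter_cons_of_pos (by simp [haj])]
      rw [this]
      show dirD (u a) (l.foldr (fun i g => dirD (u i) g) (beam (u j) f)) = _
      rw [ih hnd' hjl]
      rfl

lemma foldr_sum (hu : ∀ i, u i ≠ 0) {f : EuclideanSpace ℝ (Fin n) → ℝ}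
    (hf : ContDiff ℝ (⊤ : ℕ∞) f) (hsupp : HasCompactSupport f) (l : List (Fin m)) :
    l.foldr (fun i g => dirD (u i) g) (fun y => ∑ i, beam (u i) f y)
      = fun x => ∑ i, beam (u i) (l.foldr (fun i g => dirD (u i) g) f) x := by
  induction l with
  | nil => rfl
  | cons a l ih =>
    funext x
    show dirD (u a) (l.foldr (fun i g => dirD (u i) g) (fun y => ∑ i, beam (u i) f y)) x = _
    rw [ih]
    have hnice := foldr_nice u hf hsupp l
    show fderiv ℝ (fun y => ∑ i, beam (u i) (l.foldr (fun i g => dirD (u i) g) f) y) x (u a) = _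
    rw [fderiv_fun_sum (fun i _ => (hasFDerivAt_beam (hu i) hnice.1 hnice.2 x).differentiableAt)]
    rw [ContinuousLinearMap.sum_apply]
    refine Finset.sum_congr rfl fun i _ => ?_
    rw [fderiv_beam_apply (hu i) hnice.1 hnice.2 x (u a)]
    rfl

end Foldr



/-- applying `𝒟_{u_1} ∘ ⋯ ∘ 𝒟_{u_m}` to the order-1 star transform
`S f = Σ_i 𝒳_{u_i} f` yields `Σ_j (Π_{i ≠ j} 𝒟_{u_i}) f`. -/
theorem dirD_comp_star {n m : ℕ} (u : Fin m → EuclideanSpace ℝ (Fin n))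
    (hu : ∀ i, u i ≠ 0) (f : EuclideanSpace ℝ (Fin n) → ℝ)
    (hf : ContDiff ℝ (⊤ : ℕ∞) f) (hsupp : HasCompactSupport f)
    (x : EuclideanSpace ℝ (Fin n)) :
    ((List.finRange m).foldr (fun i g => dirD (u i) g)
        (fun y => ∑ i, beam (u i) f y)) x
      = ∑ j, (((List.finRange m).filter (fun i => i ≠ j)).foldr
          (fun i g => dirD (u i) g) f) x := by
  rw [foldr_sum u hu hf hsupp (List.finRange m)]
  refine Finset.sum_congr rfl fun j _ => ?_
  rw [← foldr_beam u hu (hu j) hf hsupp (List.finRange m)]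
  rw [foldr_cancel u hu hf hsupp (List.finRange m) (List.nodup_finRange m) j
    (List.mem_finRange j)]
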